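/- In the extended Black–Scholes model with an earnings announcement, the call price C(t,S) = C_BS(T−t, S; I(t), K, r) with I(t) = √(σ² + σ_e²/(T−t)) satisfies, for 0 ≤ t < T, the Theta identity: ∂C/∂t = Θ_BS(T−t, S; I(t), K, r) + (1/(2·I(t)))·(σ_e/(T−t))²·V_BS(T−t, S; I(t), K, r), where Θ_BS(τ, S; σ, K, r) = −S·σ·φ(d₁)/(2√τ) − r·K·e^{−rτ}·Φ(d₂) and V_BS(τ, S; σ, K, r) = S·φ(d₁)·√τ. -/

import Mathlib

open MeasureTheory ProbabilityTheory

/-- The standard normal cumulative distribution function `Φ`. -/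
noncomputable def stdNormalCDF (x : ℝ) : ℝ := ((gaussianReal 0 1) (Set.Iic x)).toReal

/-- The standard normal density `φ`. -/
noncomputable def stdNormalPDF (x : ℝ) : ℝ := Real.exp (-x ^ 2 / 2) / Real.sqrt (2 * Real.pi)

/-- The Black–Scholes quantity `d₁`. -/
noncomputable def d1 (τ S σ K r : ℝ) : ℝ :=
  (Real.log (S / K) + (r + σ ^ 2 / 2) * τ) / (σ * Real.sqrt τ)

/-- The Black–Scholes quantity `d₂ = d₁ − σ√τ`. -/
noncomputable def d2 (τ S σ K r : ℝ) : ℝ := d1 τ S σ K r - σ * Real.sqrt τ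

/-- The Black–Scholes call price `C_BS(τ, S; σ, K, r) = S·Φ(d₁) − K·e^{−rτ}·Φ(d₂)`. -/
noncomputable def BSCall (τ S σ K r : ℝ) : ℝ :=
  S * stdNormalCDF (d1 τ S σ K r) - K * Real.exp (-r * τ) * stdNormalCDF (d2 τ S σ K r)

/-- The Black–Scholes Vega `V_BS(τ, S; σ, K, r) = S·φ(d₁)·√τ`. -/
noncomputable def BSVega (τ S σ K r : ℝ) : ℝ :=
  S * stdNormalPDF (d1 τ S σ K r) * Real.sqrt τ

/-- The Black–Scholes Theta
`Θ_BS(τ, S; σ, K, r) = −S·σ·φ(d₁)/(2√τ) − r·K·e^{−rτ}·Φ(d₂)`. -/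
noncomputable def BSTheta (τ S σ K r : ℝ) : ℝ :=
  -S * σ * stdNormalPDF (d1 τ S σ K r) / (2 * Real.sqrt τ)
    - r * K * Real.exp (-r * τ) * stdNormalCDF (d2 τ S σ K r)

lemma stdNormalPDF_eq_gauss : stdNormalPDF = gaussianPDFReal 0 1 := by
  ext x
  simp only [stdNormalPDF, gaussianPDFReal, NNReal.coe_one, mul_one, sub_zero]
  rw [div_eq_inv_mul]

lemma continuous_gauss : Continuous (gaussianPDFReal 0 1) := by
  rw [← stdNormalPDF_eq_gauss]
  unfold stdNormalPDF
  fun_prop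

lemma hasDerivAt_stdNormalCDF (x : ℝ) : HasDerivAt stdNormalCDF (stdNormalPDF x) x := by
  have hint : Integrable (gaussianPDFReal 0 1) := integrable_gaussianPDFReal 0 1
  have hcdf : stdNormalCDF = fun y => stdNormalCDF 0 + ∫ u in (0:ℝ)..y, gaussianPDFReal 0 1 u := by
    funext y
    have h : ∀ z : ℝ, stdNormalCDF z = ∫ u in Set.Iic z, gaussianPDFReal 0 1 u := by
      intro z
      rw [stdNormalCDF, gaussianReal_apply_eq_integral 0 one_ne_zero,
        ENNReal.toReal_ofReal (integral_nonneg fun _ => gaussianPDFReal_nonneg _ _ _)]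
    rw [h y, h 0, ← intervalIntegral.integral_Iic_sub_Iic hint.integrableOn hint.integrableOn]
    ring
  rw [hcdf, stdNormalPDF_eq_gauss]
  exact (intervalIntegral.integral_hasDerivAt_right (hint.intervalIntegrable)
    (continuous_gauss.stronglyMeasurable.stronglyMeasurableAtFilter)
    continuous_gauss.continuousAt).const_add _

-- d1/d2 rewrite lemma: for u > 0, with I = sqrt(σ²+σe²/u),
-- d1 u S I K r = (L + r*u + (σ²*u+σe²)/2)/sqrt(σ²*u+σe²)
lemma d1_eq (σ σe S K r u : ℝ) (hσ : 0 < σ) (hσe : 0 < σe) (hu : 0 < u) :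
    d1 u S (Real.sqrt (σ ^ 2 + σe ^ 2 / u)) K r
      = (Real.log (S / K) + r * u + (σ ^ 2 * u + σe ^ 2) / 2)
        / Real.sqrt (σ ^ 2 * u + σe ^ 2) := by
  have hpos : 0 < σ ^ 2 + σe ^ 2 / u := by positivity
  have hI2 : Real.sqrt (σ ^ 2 + σe ^ 2 / u) ^ 2 = σ ^ 2 + σe ^ 2 / u := Real.sq_sqrt hpos.le
  have hden : Real.sqrt (σ ^ 2 + σe ^ 2 / u) * Real.sqrt u = Real.sqrt (σ ^ 2 * u + σe ^ 2) := by
    rw [← Real.sqrt_mul hpos.le]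
    congr 1
    field_simp
  rw [d1, hden]
  congr 1
  rw [hI2]
  field_simp
  ring

lemma d2_eq (σ σe S K r u : ℝ) (hσ : 0 < σ) (hσe : 0 < σe) (hu : 0 < u) :
    d2 u S (Real.sqrt (σ ^ 2 + σe ^ 2 / u)) K r
      = (Real.log (S / K) + r * u + (σ ^ 2 * u + σe ^ 2) / 2)
        / Real.sqrt (σ ^ 2 * u + σe ^ 2) - Real.sqrt (σ ^ 2 * u + σe ^ 2) := by
  have hpos : 0 < σ ^ 2 + σe ^ 2 / u := by positivity
  have hden : Real.sqrt (σ ^ 2 + σe ^ 2 / u) * Real.sqrt u = Real.sqrt (σ ^ 2 * u + σe ^ 2) := by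
    rw [← Real.sqrt_mul hpos.le]
    congr 1
    field_simp
  rw [d2, d1_eq σ σe S K r u hσ hσe hu, hden]

/-- Theta identity: in the extended Black–Scholes model with an EA jump,
for `0 ≤ t < T` the time derivative of the pre-announcement call price
`C(t,S) = C_BS(T−t, S; I(t), K, r)`, with `I(t) = √(σ² + σ_e²/(T−t))`, equals
`Θ_BS(T−t, S; I(t), K, r) + (1/(2·I(t)))·(σ_e/(T−t))²·V_BS(T−t, S; I(t), K, r)`. -/
theorem extendedBS_theta
    (r σ σe t T S K : ℝ) (hr : 0 ≤ r) (hσ : 0 < σ) (hσe : 0 < σe)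
    (hS : 0 < S) (hK : 0 < K) (ht : 0 ≤ t) (htT : t < T) :
    HasDerivAt (fun s : ℝ => BSCall (T - s) S (Real.sqrt (σ ^ 2 + σe ^ 2 / (T - s))) K r)
      (BSTheta (T - t) S (Real.sqrt (σ ^ 2 + σe ^ 2 / (T - t))) K r
        + 1 / (2 * Real.sqrt (σ ^ 2 + σe ^ 2 / (T - t))) * (σe / (T - t)) ^ 2
          * BSVega (T - t) S (Real.sqrt (σ ^ 2 + σe ^ 2 / (T - t))) K r) t := by
  have hτ : 0 < T - t := sub_pos.mpr htT
  set L := Real.log (S / K) with hLdef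
  set W : ℝ → ℝ := fun s => σ ^ 2 * (T - s) + σe ^ 2 with hWdef
  set A : ℝ → ℝ := fun s => (L + r * (T - s) + W s / 2) / Real.sqrt (W s) with hAdef
  set B : ℝ → ℝ := fun s => A s - Real.sqrt (W s) with hBdef
  have hWt : 0 < W t := by simp only [hWdef]; positivity
  have hsqWt : 0 < Real.sqrt (W t) := Real.sqrt_pos.mpr hWt
  -- derivatives
  have hTs : HasDerivAt (fun s : ℝ => T - s) (-1) t := (hasDerivAt_id t).const_sub T
  have hW' : HasDerivAt W (-σ ^ 2) t := by
    have := (hTs.const_mul (σ ^ 2)).add_const (σe ^ 2)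
    rw [hWdef]; refine this.congr_deriv (Eq.symm ?_); ring
  have hsq' : HasDerivAt (fun s => Real.sqrt (W s)) (-σ ^ 2 / (2 * Real.sqrt (W t))) t := by
    have := (Real.hasDerivAt_sqrt hWt.ne').comp t hW'
    refine this.congr_deriv (Eq.symm ?_)
    ring
  have hN' : HasDerivAt (fun s => L + r * (T - s) + W s / 2) (-r - σ ^ 2 / 2) t := by
    have := ((hTs.const_mul r).const_add L).add (hW'.div_const 2)
    refine this.congr_deriv (Eq.symm ?_)
    ring
  obtain ⟨A', hA'⟩ : ∃ d, HasDerivAt A d t := ⟨_, hN'.div hsq' hsqWt.ne'⟩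
  have hB' : HasDerivAt B (A' - -σ ^ 2 / (2 * Real.sqrt (W t))) t := hA'.sub hsq'
  have hE : HasDerivAt (fun s => Real.exp (-r * (T - s))) (Real.exp (-r * (T - t)) * r) t := by
    have hin : HasDerivAt (fun s : ℝ => -r * (T - s)) r t := by
      have := hTs.const_mul (-r); simpa using this
    exact (Real.hasDerivAt_exp _).comp t hin
  have hg : HasDerivAt (fun s => S * stdNormalCDF (A s)
        - K * (Real.exp (-r * (T - s)) * stdNormalCDF (B s)))
      (S * (stdNormalPDF (A t) * A')
        - K * (Real.exp (-r * (T - t)) * r * stdNormalCDF (B t)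
          + Real.exp (-r * (T - t)) * (stdNormalPDF (B t) * (A' - -σ ^ 2 / (2 * Real.sqrt (W t)))))) t := by
    exact ((((hasDerivAt_stdNormalCDF (A t)).comp t hA').const_mul S).sub
      ((hE.mul ((hasDerivAt_stdNormalCDF (B t)).comp t hB')).const_mul K))
  -- the functions agree near t
  have heq : (fun s : ℝ => BSCall (T - s) S (Real.sqrt (σ ^ 2 + σe ^ 2 / (T - s))) K r)
      =ᶠ[nhds t] (fun s => S * stdNormalCDF (A s)
        - K * (Real.exp (-r * (T - s)) * stdNormalCDF (B s))) := by
    filter_upwards [eventually_lt_nhds htT] with s hs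
    have hu : 0 < T - s := sub_pos.mpr hs
    simp only [BSCall, hAdef, hBdef, hWdef,
      d1_eq σ σe S K r (T - s) hσ hσe hu, d2_eq σ σe S K r (T - s) hσ hσe hu]
    ring
  refine HasDerivAt.congr_of_eventuallyEq ?_ heq
  refine hg.congr_deriv (Eq.symm ?_)
  -- key identity and algebra
  have hAsq : A t * Real.sqrt (W t) = L + r * (T - t) + W t / 2 := by
    simp only [hAdef]
    field_simp
  have hsqsq : Real.sqrt (W t) ^ 2 = W t := Real.sq_sqrt hWt.le
  have hBA : -(B t) ^ 2 / 2 = -(A t) ^ 2 / 2 + (L + r * (T - t)) := by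
    have hB : B t = A t - Real.sqrt (W t) := rfl
    rw [hB]
    linear_combination hAsq - hsqsq / 2
  have hexpL : Real.exp L = S / K := Real.exp_log (div_pos hS hK)
  have key : K * Real.exp (-r * (T - t)) * stdNormalPDF (B t) = S * stdNormalPDF (A t) := by
    simp only [stdNormalPDF]
    rw [hBA, Real.exp_add, Real.exp_add, hexpL]
    have h1 : Real.exp (-r * (T - t)) * Real.exp (r * (T - t)) = 1 := by
      rw [← Real.exp_add]; ring_nf; exact Real.exp_zero
    set Q := Real.sqrt (2 * Real.pi) with hQ
    have hQ0 : Q ≠ 0 := by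
      rw [hQ]; positivity
    have h2 : Real.exp (-(r * (T - t))) * Real.exp (r * (T - t)) = 1 := by
      rw [← Real.exp_add]; ring_nf; exact Real.exp_zero
    field_simp
    linear_combination h2
  have hτsq : Real.sqrt (T - t) ^ 2 = T - t := Real.sq_sqrt hτ.le
  have hIpos : 0 < Real.sqrt (σ ^ 2 + σe ^ 2 / (T - t)) := by
    apply Real.sqrt_pos.mpr; positivity
  have hI2 : Real.sqrt (σ ^ 2 + σe ^ 2 / (T - t)) ^ 2 = σ ^ 2 + σe ^ 2 / (T - t) := by
    apply Real.sq_sqrt; positivity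
  have hsplit : Real.sqrt (W t) = Real.sqrt (σ ^ 2 + σe ^ 2 / (T - t)) * Real.sqrt (T - t) := by
    rw [← Real.sqrt_mul (by positivity : (0:ℝ) ≤ σ ^ 2 + σe ^ 2 / (T - t))]
    simp only [hWdef]
    congr 1
    field_simp
  simp only [BSTheta, BSVega, d1_eq σ σe S K r (T - t) hσ hσe hτ,
    d2_eq σ σe S K r (T - t) hσ hσe hτ]
  simp only [hBdef, hAdef, hWdef, hLdef] at key ⊢
  rw [hsplit] at key ⊢
  set I : ℝ := Real.sqrt (σ ^ 2 + σe ^ 2 / (T - t)) with hIdef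
  set R : ℝ := Real.sqrt (T - t) with hRdef
  set X := (Real.log (S / K) + r * (T - t) + (σ ^ 2 * (T - t) + σe ^ 2) / 2) / (I * R) with hXdef
  set P := stdNormalPDF X with hPdef
  set Pb := stdNormalPDF (X - I * R) with hPbdef
  set C := stdNormalCDF (X - I * R) with hCdef
  have hRpos : 0 < R := Real.sqrt_pos.mpr hτ
  rw [← hτsq] at hI2 key ⊢
  rw [show (-r * R ^ 2 : ℝ) = -(R ^ 2 * r) from by ring] at key
  have hσ2 : σ ^ 2 = I ^ 2 - σe ^ 2 / R ^ 2 := by linear_combination -hI2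
  rw [hσ2]
  field_simp
  ring_nf
  linear_combination (2 * I * R ^ 3 * A' + I ^ 2 * R ^ 2 - σe ^ 2) * key
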